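/- Let Λ be a standard periodic set in ℝ^d and Q ∈ S̃^d_{≥0}. Then the Delone subdivision of Q equals the set of projections of the at-most-d-dimensional faces of the lifted polyhedron: Del(Q) = {π(F̄) : F̄ is a face of conv{w_Q(x) : x ∈ Λ} of dimension at most d}, where w_Q(x) = (x, Q[x]) and π : ℝ^{d+1} → ℝ^d is the projection onto the first d coordinates. -/

import Mathlib

open Matrix Finset MeasureTheory Polynomial

noncomputable section

namespace Vor

variable {d : ℕ}

/-- The space of real `d × d` matrices (quadratic forms live in the symmetric ones). -/
abbrev Md (d : ℕ) := Matrix (Fin d) (Fin d) ℝ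

/-- Trace inner product `⟨A, B⟩ = trace (A * B)` on matrices. -/
def minner (A B : Md d) : ℝ := (A * B).trace

/-- The quadratic form `Q[x] = xᵗ Q x`. -/
def qf (Q : Md d) (x : Fin d → ℝ) : ℝ := x ⬝ᵥ Q.mulVec x

/-- The real vector associated to an integral vector. -/
def intVec (v : Fin d → ℤ) : Fin d → ℝ := fun j => (v j : ℝ)

/-- The lattice `ℤ^d` viewed inside `ℝ^d`. -/
def latticeZ (d : ℕ) : Set (Fin d → ℝ) := Set.range (intVec (d := d))

/-- A standard periodic set `Λ = ⋃ i, (tᵢ + ℤ^d)`. -/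
def IsStdPeriodic (Λ : Set (Fin d → ℝ)) : Prop :=
  ∃ m : ℕ, 0 < m ∧ ∃ t : Fin m → (Fin d → ℝ),
    Λ = {x | ∃ (i : Fin m) (v : Fin d → ℤ), x = t i + intVec v}

/-- The real matrix obtained from an integral matrix. -/
def rmat (U : Matrix (Fin d) (Fin d) ℤ) : Md d := U.map fun z => (z : ℝ)

/-- `U ∈ GL_d(ℤ)`. -/
def IsUnimodular (U : Matrix (Fin d) (Fin d) ℤ) : Prop := IsUnit U.det

/-- The action `Q ↦ Uᵗ Q U`. -/
def conjQ (U : Matrix (Fin d) (Fin d) ℤ) (Q : Md d) : Md d := (rmat U)ᵀ * Q * rmat U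

/-- The action of `GL_d(ℤ)` on subsets of the space of forms. -/
def conjSet (U : Matrix (Fin d) (Fin d) ℤ) (S : Set (Md d)) : Set (Md d) := conjQ U '' S

/-- The rational closure `S̃^d_{≥0}`: positive semidefinite forms that are
`GL_d(ℤ)`-equivalent to a block diagonal form with a zero block and a positive
definite block. -/
def RationalClosure (d : ℕ) : Set (Md d) :=
  {Q | Q.PosSemidef ∧ ∃ U : Matrix (Fin d) (Fin d) ℤ, IsUnimodular U ∧ ∃ k : ℕ, k ≤ d ∧
    (∀ i j : Fin d, ((i : ℕ) < k ∨ (j : ℕ) < k) → conjQ U Q i j = 0) ∧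
    (∀ x : Fin d → ℝ, (∀ i : Fin d, (i : ℕ) < k → x i = 0) → x ≠ 0 → 0 < qf (conjQ U Q) x)}

/-- `P` is a Delone polyhedron of the form `Q` with respect to the point set `Λ`:
`P` is the convex hull of the set `S` of points of `Λ` lying on some sphere
(center `c`, radius `r`) which contains no other point of `Λ` on it or inside. -/
def IsDelonePoly (Λ : Set (Fin d → ℝ)) (Q : Md d) (P : Set (Fin d → ℝ)) : Prop :=
  ∃ S : Set (Fin d → ℝ), S ⊆ Λ ∧ S.Nonempty ∧ P = convexHull ℝ S ∧
    ∃ (c : Fin d → ℝ) (r : ℝ),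
      (∀ v ∈ S, qf Q (c - v) = r ^ 2) ∧ ∀ v ∈ Λ, v ∉ S → r ^ 2 < qf Q (c - v)

/-- The Delone subdivision of `Q` with respect to `Λ`. -/
def DelSub (Λ : Set (Fin d → ℝ)) (Q : Md d) : Set (Set (Fin d → ℝ)) :=
  {P | IsDelonePoly Λ Q P}

/-- The secondary cone of a (Delone) subdivision `D`:
all forms in the rational closure whose Delone subdivision is `D`. -/
def SecCone (Λ : Set (Fin d → ℝ)) (D : Set (Set (Fin d → ℝ))) : Set (Md d) :=
  {Q | Q ∈ RationalClosure d ∧ DelSub Λ Q = D}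

/-- `α` gives the coefficients of an affine combination of the points of `V` representing `w`. -/
def IsAffComb (V : Finset (Fin d → ℝ)) (α : (Fin d → ℝ) → ℝ) (w : Fin d → ℝ) : Prop :=
  (∑ v ∈ V, α v) = 1 ∧ (∑ v ∈ V, α v • v) = w

/-- The form `N_{V,w} = wwᵗ - ∑_{v ∈ V} α_v vvᵗ`. -/
def Nform (V : Finset (Fin d → ℝ)) (α : (Fin d → ℝ) → ℝ) (w : Fin d → ℝ) : Md d :=
  vecMulVec w w - ∑ v ∈ V, α v • vecMulVec v v

/-- A finite set of points is affinely independent. -/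
def AffIndep (V : Finset (Fin d → ℝ)) : Prop :=
  AffineIndependent ℝ (fun v : {x // x ∈ V} => (v : Fin d → ℝ))

/-- Insertion into a finset (classical, to avoid decidability assumptions). -/
def finsert (w : Fin d → ℝ) (V : Finset (Fin d → ℝ)) : Finset (Fin d → ℝ) :=
  letI := Classical.decEq (Fin d → ℝ)
  insert w V

/-- A polyhedron: a finite intersection of closed halfspaces. -/
def IsPolyhedron (P : Set (Fin d → ℝ)) : Prop :=
  ∃ (n : ℕ) (a : Fin n → (Fin d → ℝ)) (b : Fin n → ℝ), P = {x | ∀ i, a i ⬝ᵥ x ≤ b i}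

/-- `F` is a face of `P` (cut out by a supporting hyperplane). -/
def IsFaceOf (F P : Set (Fin d → ℝ)) : Prop :=
  ∃ (a : Fin d → ℝ) (b : ℝ), (∀ x ∈ P, a ⬝ᵥ x ≤ b) ∧ F = {x ∈ P | a ⬝ᵥ x = b}

/-- The (affine) dimension of a set of points. -/
def sdim (S : Set (Fin d → ℝ)) : ℕ := Module.finrank ℝ ↥(vectorSpan ℝ S)

/-- A (face-to-face) polyhedral subdivision of `ℝ^d`. -/
def IsPolySubdiv (D : Set (Set (Fin d → ℝ))) : Prop :=
  (∀ P ∈ D, IsPolyhedron P ∧ P.Nonempty) ∧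
  ⋃₀ D = Set.univ ∧
  (∀ P ∈ D, ∀ F : Set (Fin d → ℝ), IsFaceOf F P → F.Nonempty → F ∈ D) ∧
  ∀ P ∈ D, ∀ P' ∈ D, (P ∩ P').Nonempty → IsFaceOf (P ∩ P') P

/-- `D` has vertex-set `Λ`: every member is the convex hull of its points of `Λ`. -/
def HasVertexSet (Λ : Set (Fin d → ℝ)) (D : Set (Set (Fin d → ℝ))) : Prop :=
  ∀ P ∈ D, P = convexHull ℝ (Λ ∩ P)

/-- A (closed) polyhedral cone in the space of matrices. -/
def IsPolyConeM (C : Set (Md d)) : Prop :=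
  ∃ (n : ℕ) (A : Fin n → Md d), C = {Q | ∀ i, 0 ≤ minner (A i) Q}

/-- `F` is a face of the cone `C` in the space of matrices. -/
def IsFaceOfM (F C : Set (Md d)) : Prop :=
  ∃ A : Md d, (∀ X ∈ C, 0 ≤ minner A X) ∧ F = {X ∈ C | minner A X = 0}

/-- A relatively open polyhedral cone: solutions of finitely many linear equalities and
strict linear inequalities. -/
def IsRelOpenPolyCone (C : Set (Md d)) : Prop :=
  ∃ (n m : ℕ) (A : Fin n → Md d) (B : Fin m → Md d),
    C = {Q | (∀ i, minner (A i) Q = 0) ∧ ∀ j, 0 < minner (B j) Q}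

/-- Condition (a): the linear equalities coming from the `d`-dimensional cells of `D`. -/
def condA (Λ : Set (Fin d → ℝ)) (D : Set (Set (Fin d → ℝ))) (Q : Md d) : Prop :=
  ∀ P ∈ D, sdim P = d →
    ∀ V : Finset (Fin d → ℝ), (↑V : Set (Fin d → ℝ)) ⊆ Λ ∩ P → AffIndep V → V.card = d + 1 →
      ∀ w ∈ Λ ∩ P, ∀ α : (Fin d → ℝ) → ℝ, IsAffComb V α w →
        minner (Nform V α w) Q = 0

/-- Condition (b): the linear strict inequalities coming from the `(d-1)`-dimensional
cells of `D`. -/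
def condB (Λ : Set (Fin d → ℝ)) (D : Set (Set (Fin d → ℝ))) (Q : Md d) : Prop :=
  ∀ F ∈ D, sdim F = d - 1 →
    ∀ P ∈ D, ∀ P' ∈ D, sdim P = d → sdim P' = d → P ≠ P' → F = P ∩ P' →
      ∀ V : Finset (Fin d → ℝ), (↑V : Set (Fin d → ℝ)) ⊆ Λ ∩ F → AffIndep V → V.card = d →
        ∀ w ∈ (Λ ∩ P) \ F, ∀ w' ∈ (Λ ∩ P') \ F,
          ∀ α : (Fin d → ℝ) → ℝ, IsAffComb (finsert w V) α w' →
            0 < minner (Nform (finsert w V) α w') Q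

/-- The lifting map `w_Q(x) = (x, Q[x]) ∈ ℝ^{d+1}`. -/
def liftQ (Q : Md d) (x : Fin d → ℝ) : Fin (d + 1) → ℝ := Fin.snoc x (qf Q x)

/-- Projection `ℝ^{d+1} → ℝ^d` onto the first `d` coordinates. -/
def projd (y : Fin (d + 1) → ℝ) : Fin d → ℝ := fun i => y i.castSucc

/-- `G` is a finite subgroup of `GL_d(ℤ)` (given as a set of integral matrices). -/
def IsFinMatGroup (G : Set (Matrix (Fin d) (Fin d) ℤ)) : Prop :=
  G.Finite ∧ (1 : Matrix (Fin d) (Fin d) ℤ) ∈ G ∧ (∀ g ∈ G, IsUnimodular g) ∧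
    (∀ g ∈ G, ∀ h ∈ G, g * h ∈ G) ∧ ∀ g ∈ G, g⁻¹ ∈ G

/-- The space of invariant forms `F(G)` of `G ≤ GL_d(ℤ)`. -/
def FG (G : Set (Matrix (Fin d) (Fin d) ℤ)) : Set (Md d) :=
  {Q | Q.IsSymm ∧ ∀ g ∈ G, conjQ g Q = Q}

/-- The Bravais group `B(G)`: the pointwise stabilizer of `F(G)` in `GL_d(ℤ)`. -/
def BG (G : Set (Matrix (Fin d) (Fin d) ℤ)) : Set (Matrix (Fin d) (Fin d) ℤ) :=
  {g | IsUnimodular g ∧ ∀ Q ∈ FG G, conjQ g Q = Q}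

/-- The normalizer `N(B(G))` of the Bravais group in `GL_d(ℤ)`. -/
def NBG (G : Set (Matrix (Fin d) (Fin d) ℤ)) : Set (Matrix (Fin d) (Fin d) ℤ) :=
  {n | IsUnimodular n ∧ ∀ b : Matrix (Fin d) (Fin d) ℤ, b ∈ BG G ↔ n⁻¹ * b * n ∈ BG G}

/-- The inhomogeneous minimum `μ(Q) = sup_x inf_{v ∈ ℤ^d} Q[x - v]`. -/
def InhomMin (Q : Md d) : ℝ :=
  ⨆ x : Fin d → ℝ, ⨅ v : Fin d → ℤ, qf Q (x - intVec v)

/-- The bilinear form `(x, y) = xᵗ Q y` associated to `Q`. -/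
def bip (Q : Md d) (x y : Fin d → ℝ) : ℝ := x ⬝ᵥ Q.mulVec y

/-- `F` is a facet of the subdivision `D`: a `(d-1)`-dimensional cell, the intersection of
two adjacent `d`-dimensional cells. -/
def IsFacetOfSubdiv (D : Set (Set (Fin d → ℝ))) (F : Set (Fin d → ℝ)) : Prop :=
  F ∈ D ∧ sdim F = d - 1 ∧
    ∃ P ∈ D, ∃ P' ∈ D, sdim P = d ∧ sdim P' = d ∧ P ≠ P' ∧ F = P ∩ P'

/-- The linear subspace `U` of forms satisfying all equalities of the secondary cone of `D`. -/
def UD (Λ : Set (Fin d → ℝ)) (D : Set (Set (Fin d → ℝ))) : Set (Md d) :=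
  {X | X.IsSymm ∧ condA Λ D X}

/-- `ND` assigns to each facet `F` of `D` the form `N_{D,F}`: the unit-norm form in `U`
such that the projection onto `U` of every form `N_{V∪{w},w'}` attached to `F` is a
positive multiple of it. -/
def IsNDassign (Λ : Set (Fin d → ℝ)) (D : Set (Set (Fin d → ℝ)))
    (ND : Set (Fin d → ℝ) → Md d) : Prop :=
  ∀ F, IsFacetOfSubdiv D F → ND F ∈ UD Λ D ∧ minner (ND F) (ND F) = 1 ∧
    ∀ P ∈ D, ∀ P' ∈ D, sdim P = d → sdim P' = d → P ≠ P' → F = P ∩ P' →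
      ∀ V : Finset (Fin d → ℝ), (↑V : Set (Fin d → ℝ)) ⊆ Λ ∩ F → AffIndep V → V.card = d →
        ∀ w ∈ (Λ ∩ P) \ F, ∀ w' ∈ (Λ ∩ P') \ F,
          ∀ α : (Fin d → ℝ) → ℝ, IsAffComb (finsert w V) α w' →
            ∃ β : ℝ, 0 < β ∧ ∀ X ∈ UD Λ D,
              minner (Nform (finsert w V) α w') X = β * minner (ND F) X

/-- The set `R_F` of facets of `D` whose form `N_{D,F'}` projects onto `T` to a positive
multiple of `NF`. -/
def RFset (Λ : Set (Fin d → ℝ)) (D : Set (Set (Fin d → ℝ)))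
    (ND : Set (Fin d → ℝ) → Md d) (T : Set (Md d)) (NF : Md d) :
    Set (Set (Fin d → ℝ)) :=
  {F | IsFacetOfSubdiv D F ∧ ∃ γ : ℝ, 0 < γ ∧ ∀ X ∈ T, minner (ND F) X = γ * minner NF X}

/-- The chain relation on the facets of `R_F`: connected by a chain of adjacent
`d`-dimensional cells of `D`. -/
def FlipRel (D RFs : Set (Set (Fin d → ℝ))) (F1 F2 : Set (Fin d → ℝ)) : Prop :=
  ∃ (n : ℕ) (Fch : Fin (n + 1) → Set (Fin d → ℝ)) (Pch : Fin (n + 2) → Set (Fin d → ℝ)),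
    Fch 0 = F1 ∧ Fch (Fin.last n) = F2 ∧ (∀ i, Fch i ∈ RFs) ∧
    ∀ i : Fin (n + 1), Pch i.castSucc ∈ D ∧ Pch i.succ ∈ D ∧
      sdim (Pch i.castSucc) = d ∧ sdim (Pch i.succ) = d ∧
      Fch i = Pch i.castSucc ∩ Pch i.succ

/-- `C` is an equivalence class of the chain relation on `RFs`. -/
def IsEqClass (D RFs C : Set (Set (Fin d → ℝ))) : Prop :=
  C ⊆ RFs ∧ C.Nonempty ∧ ∀ F1 ∈ C, ∀ F2 ∈ RFs, (FlipRel D RFs F1 F2 ↔ F2 ∈ C)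

/-- The vertex set `V_C` of an equivalence class `C`: all vertices of `d`-dimensional
cells of `D` having a facet in `C`. -/
def VCset (Λ : Set (Fin d → ℝ)) (D C : Set (Set (Fin d → ℝ))) : Set (Fin d → ℝ) :=
  {x | ∃ P ∈ D, sdim P = d ∧ (∃ F ∈ C, IsFaceOf F P) ∧ x ∈ Λ ∩ P}

/-- A lower facet of a set in `ℝ^{d+1}`: a facet whose outer normal has negative last
coordinate. -/
def IsLowerFacet (S F : Set (Fin (d + 1) → ℝ)) : Prop :=
  ∃ (a : Fin (d + 1) → ℝ) (b : ℝ), (∀ x ∈ S, a ⬝ᵥ x ≤ b) ∧ F = {x ∈ S | a ⬝ᵥ x = b} ∧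
    Module.finrank ℝ ↥(vectorSpan ℝ F) = d ∧ a (Fin.last d) < 0

/-- An upper facet of a set in `ℝ^{d+1}`: a facet whose outer normal has positive last
coordinate. -/
def IsUpperFacet (S F : Set (Fin (d + 1) → ℝ)) : Prop :=
  ∃ (a : Fin (d + 1) → ℝ) (b : ℝ), (∀ x ∈ S, a ⬝ᵥ x ≤ b) ∧ F = {x ∈ S | a ⬝ᵥ x = b} ∧
    Module.finrank ℝ ↥(vectorSpan ℝ F) = d ∧ 0 < a (Fin.last d)

/-! ### Auxiliary lemmas for statement11 -/

section Aux

lemma aux_intVec_add (v w : Fin d → ℤ) : intVec (v + w) = intVec v + intVec w := by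
  funext i; simp [intVec]

lemma aux_intVec_zsmul (n : ℤ) (w : Fin d → ℤ) :
    intVec (n • w) = (n : ℝ) • intVec w := by
  funext i
  simp only [intVec, Pi.smul_apply, smul_eq_mul]
  push_cast
  ring

lemma aux_intVec_single (j : Fin d) :
    intVec (Pi.single j (1 : ℤ)) = Pi.single j (1 : ℝ) := by
  funext i
  by_cases h : i = j <;> simp [intVec, h, Pi.single_apply]

lemma aux_periodic_add {Λ : Set (Fin d → ℝ)} (hΛ : IsStdPeriodic Λ)
    {x : Fin d → ℝ} (hx : x ∈ Λ) (w : Fin d → ℤ) : x + intVec w ∈ Λ := by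
  obtain ⟨m, hm, t, rfl⟩ := hΛ
  obtain ⟨i, v, rfl⟩ := hx
  exact ⟨i, v + w, by rw [aux_intVec_add, add_assoc]⟩

lemma aux_periodic_nonempty {Λ : Set (Fin d → ℝ)} (hΛ : IsStdPeriodic Λ) :
    Λ.Nonempty := by
  obtain ⟨m, hm, t, rfl⟩ := hΛ
  exact ⟨t ⟨0, hm⟩ + intVec 0, ⟨0, hm⟩, 0, rfl⟩

lemma aux_dot_linear {n : ℕ} (a : Fin n → ℝ) :
    IsLinearMap ℝ (fun x : Fin n → ℝ => a ⬝ᵥ x) :=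
  ⟨fun x y => dotProduct_add a x y, fun c x => (dotProduct_smul c a x).symm ▸ by
    simp [dotProduct_smul]⟩

lemma aux_hull_le {n : ℕ} {T : Set (Fin n → ℝ)} {a : Fin n → ℝ} {b : ℝ}
    (h : ∀ t ∈ T, a ⬝ᵥ t ≤ b) : ∀ x ∈ convexHull ℝ T, a ⬝ᵥ x ≤ b := by
  have hc : Convex ℝ {x : Fin n → ℝ | a ⬝ᵥ x ≤ b} :=
    convex_halfSpace_le (aux_dot_linear a) b
  exact fun x hx => convexHull_min (fun t ht => h t ht) hc hx

lemma aux_hull_eq {n : ℕ} {T : Set (Fin n → ℝ)} {a : Fin n → ℝ} {b : ℝ}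
    (h : ∀ t ∈ T, a ⬝ᵥ t = b) : ∀ x ∈ convexHull ℝ T, a ⬝ᵥ x = b := by
  have hc : Convex ℝ {x : Fin n → ℝ | a ⬝ᵥ x = b} :=
    convex_hyperplane (aux_dot_linear a) b
  exact fun x hx => convexHull_min (fun t ht => h t ht) hc hx

/-- A supporting hyperplane cuts from a convex hull exactly the hull of the
touching generators. -/
lemma aux_hull_face_eq {n : ℕ} (T : Set (Fin n → ℝ)) (a : Fin n → ℝ) (b : ℝ)
    (h : ∀ t ∈ T, a ⬝ᵥ t ≤ b) :
    {x ∈ convexHull ℝ T | a ⬝ᵥ x = b} = convexHull ℝ {t ∈ T | a ⬝ᵥ t = b} := by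
  apply Set.Subset.antisymm
  · rintro x ⟨hxh, hxb⟩
    rw [_root_.convexHull_eq] at hxh
    obtain ⟨ι, t, w, z, hw0, hw1, hz, hx⟩ := hxh
    classical
    -- a ⬝ᵥ x = ∑ w i * (a ⬝ᵥ z i)
    have hcm : x = ∑ i ∈ t, w i • z i := by
      rw [← hx, Finset.centerMass_eq_of_sum_1 _ _ hw1]
    have hdot : ∑ i ∈ t, w i * (a ⬝ᵥ z i) = b := by
      have : a ⬝ᵥ x = ∑ i ∈ t, w i * (a ⬝ᵥ z i) := by
        rw [hcm]
        have hmap : a ⬝ᵥ ∑ i ∈ t, w i • z i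
            = ∑ i ∈ t, a ⬝ᵥ (w i • z i) :=
          map_sum (IsLinearMap.mk' _ (aux_dot_linear a)) (fun i => w i • z i) t
        rw [hmap]
        exact Finset.sum_congr rfl fun i _ => by
          simp [dotProduct_smul, smul_eq_mul]
      rw [← this, hxb]
    have hterm : ∀ i ∈ t, w i * (a ⬝ᵥ z i) = w i * b := by
      rw [← Finset.sum_eq_sum_iff_of_le
        (fun i hi => mul_le_mul_of_nonneg_left (h _ (hz i hi)) (hw0 i hi))]
      rw [hdot, ← Finset.sum_mul, hw1, one_mul]
    have heqz : ∀ i ∈ t, w i ≠ 0 → a ⬝ᵥ z i = b := fun i hi hwi =>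
      mul_left_cancel₀ hwi (hterm i hi)
    rw [← Finset.centerMass_filter_ne_zero z] at hx
    rw [← hx]
    apply Finset.centerMass_mem_convexHull
    · exact fun i hi => hw0 i (Finset.mem_filter.mp hi).1
    · rw [Finset.sum_filter_ne_zero, hw1]; exact one_pos
    · intro i hi
      rcases Finset.mem_filter.mp hi with ⟨hit, hwi⟩
      exact ⟨hz i hit, heqz i hit hwi⟩
  · intro x hx
    refine ⟨convexHull_mono (fun t ht => ht.1) hx, ?_⟩
    exact aux_hull_eq (fun t ht => ht.2) x hx

/-- `projd` as a linear map. -/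
def projdL : (Fin (d + 1) → ℝ) →ₗ[ℝ] (Fin d → ℝ) :=
  LinearMap.funLeft ℝ ℝ Fin.castSucc

lemma aux_projd_eq : (projd : (Fin (d + 1) → ℝ) → Fin d → ℝ) = projdL := rfl

lemma aux_projd_hull (T : Set (Fin (d + 1) → ℝ)) :
    projd '' convexHull ℝ T = convexHull ℝ (projd '' T) := by
  rw [aux_projd_eq]
  exact projdL.image_convexHull T

lemma aux_projd_lift (Q : Md d) (v : Fin d → ℝ) : projd (liftQ Q v) = v := by
  funext i; simp [projd, liftQ]

lemma aux_dot_lift (a : Fin (d + 1) → ℝ) (Q : Md d) (v : Fin d → ℝ) :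
    a ⬝ᵥ liftQ Q v = projd a ⬝ᵥ v + a (Fin.last d) * qf Q v := by
  simp [liftQ, dotProduct, Fin.sum_univ_castSucc, projd]

lemma aux_dot_mulVec_symm {Q : Md d} (hQs : Qᵀ = Q) (x y : Fin d → ℝ) :
    x ⬝ᵥ Q.mulVec y = y ⬝ᵥ Q.mulVec x := by
  rw [dotProduct_mulVec, ← mulVec_transpose, hQs, dotProduct_comm]

lemma aux_qf_sub {Q : Md d} (hQs : Qᵀ = Q) (c v : Fin d → ℝ) :
    qf Q (c - v) = qf Q c - 2 * (Q.mulVec c ⬝ᵥ v) + qf Q v := by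
  have h1 : v ⬝ᵥ Q.mulVec c = Q.mulVec c ⬝ᵥ v := dotProduct_comm _ _
  have h2 : c ⬝ᵥ Q.mulVec v = Q.mulVec c ⬝ᵥ v := by
    rw [aux_dot_mulVec_symm hQs c v, h1]
  simp only [qf, Matrix.mulVec_sub, dotProduct_sub, sub_dotProduct, h1, h2]
  ring

lemma aux_qf_add {Q : Md d} (hQs : Qᵀ = Q) (x u : Fin d → ℝ) :
    qf Q (x + u) = qf Q x + 2 * (Q.mulVec x ⬝ᵥ u) + qf Q u := by
  have h1 : u ⬝ᵥ Q.mulVec x = Q.mulVec x ⬝ᵥ u := dotProduct_comm _ _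
  have h2 : x ⬝ᵥ Q.mulVec u = Q.mulVec x ⬝ᵥ u := by
    rw [aux_dot_mulVec_symm hQs x u, h1]
  simp only [qf, Matrix.mulVec_add, dotProduct_add, add_dotProduct, h1, h2]
  ring

lemma aux_qf_smul (Q : Md d) (r : ℝ) (x : Fin d → ℝ) :
    qf Q (r • x) = r ^ 2 * qf Q x := by
  simp only [qf, Matrix.mulVec_smul, dotProduct_smul, smul_dotProduct, smul_eq_mul]
  ring

lemma aux_psd_symm {Q : Md d} (h : Q.PosSemidef) : Qᵀ = Q := by
  have := h.1
  rwa [Matrix.IsHermitian, conjTranspose_eq_transpose_of_trivial] at this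

lemma aux_qf_nonneg {Q : Md d} (h : Q.PosSemidef) (x : Fin d → ℝ) : 0 ≤ qf Q x := by
  have := h.dotProduct_mulVec_nonneg x
  simpa [qf] using this

lemma aux_qf_zero {Q : Md d} (h : Q.PosSemidef) {x : Fin d → ℝ}
    (hx : qf Q x = 0) : Q.mulVec x = 0 := by
  have := (h.dotProduct_mulVec_zero_iff x).mp (by simpa [qf] using hx)
  exact this

lemma aux_Q_eq_zero {Q : Md d} (h : Q.PosSemidef)
    (hd : ∀ j, qf Q (Pi.single j (1 : ℝ)) = 0) : Q = 0 := by
  have hcol : ∀ j, Q.mulVec (Pi.single j 1) = 0 := fun j => aux_qf_zero h (hd j)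
  ext i j
  have := congrFun (hcol j) i
  simpa [Matrix.mulVec_single] using this

lemma aux_int_linear_bounded {C g b : ℝ} (h : ∀ n : ℤ, C + (n : ℝ) * g ≤ b) :
    g = 0 := by
  by_contra hg
  rcases lt_or_gt_of_ne hg with hneg | hpos
  · obtain ⟨n, hn⟩ := exists_int_lt ((b - C) / g)
    have := h n
    have : (n : ℝ) * g > b - C := by
      calc (n : ℝ) * g > ((b - C) / g) * g := by
            exact (mul_lt_mul_right_of_neg hneg).mpr hn
        _ = b - C := div_mul_cancel₀ _ (ne_of_lt hneg)
    linarith [h n]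
  · obtain ⟨n, hn⟩ := exists_int_gt ((b - C) / g)
    have : (n : ℝ) * g > b - C := by
      calc (n : ℝ) * g > ((b - C) / g) * g := by
            exact (mul_lt_mul_iff_of_pos_right hpos).mpr hn
        _ = b - C := div_mul_cancel₀ _ (ne_of_gt hpos)
    linarith [h n]

lemma aux_int_quadratic_bounded {C g A b : ℝ} (hA : 0 < A)
    (h : ∀ n : ℤ, C + (n : ℝ) * g + (n : ℝ) ^ 2 * A ≤ b) : False := by
  have hsq : ∀ n : ℤ, (n : ℝ) ^ 2 * A ≤ b - C := by
    intro n
    have h1 := h n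
    have h2 := h (-n)
    push_cast at h2
    nlinarith
  obtain ⟨n, hn⟩ := exists_int_gt (max 1 ((b - C) / A))
  have hn1 : (1 : ℝ) < n := lt_of_le_of_lt (le_max_left _ _) hn
  have hn2 : (b - C) / A < n := lt_of_le_of_lt (le_max_right _ _) hn
  have : b - C < (n : ℝ) * A := (div_lt_iff₀ hA).mp hn2
  have hle : (n : ℝ) ≤ (n : ℝ) ^ 2 := by nlinarith
  have hsqn : (n : ℝ) * A ≤ (n : ℝ) ^ 2 * A := mul_le_mul_of_nonneg_right hle hA.le
  linarith [hsq n]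

end Aux

section Aux2

lemma aux_dot_linear' {n : ℕ} (u : Fin n → ℝ) :
    IsLinearMap ℝ (fun x : Fin n → ℝ => x ⬝ᵥ u) :=
  ⟨fun x y => add_dotProduct x y u, fun c x => by simp [smul_dotProduct]⟩

/-- The kernel of a form in the rational closure is spanned by its integral
vectors. -/
lemma aux_ker_span {Q : Md d} (hQ : Q ∈ RationalClosure d) :
    ∀ z : Fin d → ℝ, Q.mulVec z = 0 →
      z ∈ Submodule.span ℝ
        {y : Fin d → ℝ | (∃ w : Fin d → ℤ, y = intVec w) ∧ Q.mulVec y = 0} := by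
  classical
  obtain ⟨hpsd, U, hU, k, hk, hzero, hpos⟩ := hQ
  intro z hz
  set R : Md d := rmat U with hR
  have hdet : R.det = ((U.det : ℤ) : ℝ) := (RingHom.map_det (Int.castRingHom ℝ) U).symm
  have hdetR : IsUnit R.det := by rw [hdet]; exact hU.map (Int.castRingHom ℝ)
  have hdetRT : IsUnit Rᵀ.det := by rwa [Matrix.det_transpose]
  set x : Fin d → ℝ := R⁻¹.mulVec z with hx
  have hxz : R.mulVec x = z := by
    rw [hx, Matrix.mulVec_mulVec, Matrix.mul_nonsing_inv _ hdetR, Matrix.one_mulVec]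
  have hQ'x : (conjQ U Q).mulVec x = 0 := by
    show ((rmat U)ᵀ * Q * rmat U).mulVec x = 0
    rw [← Matrix.mulVec_mulVec, ← Matrix.mulVec_mulVec, ← hR, hxz, hz,
      Matrix.mulVec_zero]
  set x₂ : Fin d → ℝ := fun i => if (i : ℕ) < k then 0 else x i with hx₂
  have hQ'x₂ : (conjQ U Q).mulVec x₂ = 0 := by
    rw [← hQ'x]
    funext j
    simp only [Matrix.mulVec, dotProduct]
    refine Finset.sum_congr rfl fun i _ => ?_
    by_cases hik : (i : ℕ) < k
    · rw [hzero j i (Or.inr hik)]; simp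
    · simp [hx₂, hik]
  have hqf2 : qf (conjQ U Q) x₂ = 0 := by rw [qf, hQ'x₂, dotProduct_zero]
  have hx₂0 : x₂ = 0 := by
    by_contra hne
    have := hpos x₂ (fun i hik => by simp [hx₂, Nat.lt_irrefl, hik]) hne
    rw [hqf2] at this; exact lt_irrefl 0 this
  have hxsupp : ∀ i : Fin d, ¬ ((i : ℕ) < k) → x i = 0 := by
    intro i hik
    have := congrFun hx₂0 i
    simpa [hx₂, hik] using this
  have hcolker : ∀ i : Fin d, (i : ℕ) < k → Q.mulVec (fun j => R j i) = 0 := by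
    intro i hik
    have h1 : R.mulVec (Pi.single i 1) = fun j => R j i := by
      rw [Matrix.mulVec_single_one]; funext j; rfl
    have h2 : ((rmat U)ᵀ * Q * rmat U).mulVec (Pi.single i 1) = 0 := by
      rw [Matrix.mulVec_single_one]
      funext j
      have h0 := hzero j i (Or.inr hik)
      simp only [conjQ] at h0
      rw [Matrix.col_apply, h0]; simp
    have h3 : Rᵀ.mulVec (Q.mulVec (fun j => R j i)) = 0 := by
      rw [← h1]
      have heq : ((rmat U)ᵀ * Q * rmat U).mulVec (Pi.single i 1)
          = Rᵀ.mulVec (Q.mulVec (R.mulVec (Pi.single i 1))) := by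
        rw [Matrix.mulVec_mulVec, Matrix.mulVec_mulVec, ← hR, Matrix.mul_assoc]
      rw [← heq, h2]
    have h4 := congrArg (fun v => (Rᵀ)⁻¹.mulVec v) h3
    simp only [Matrix.mulVec_mulVec, Matrix.mulVec_zero] at h4
    rwa [← Matrix.mul_assoc, Matrix.nonsing_inv_mul _ hdetRT, Matrix.one_mul] at h4
  have hzsum : z = ∑ i : Fin d, x i • (fun j => R j i) := by
    rw [← hxz]
    funext j
    rw [Finset.sum_apply]
    simp only [Pi.smul_apply, smul_eq_mul]
    simp [Matrix.mulVec, dotProduct, mul_comm]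
  rw [hzsum]
  refine Submodule.sum_mem _ fun i _ => ?_
  by_cases hik : (i : ℕ) < k
  · refine Submodule.smul_mem _ _ (Submodule.subset_span ?_)
    refine ⟨⟨fun j => U j i, ?_⟩, hcolker i hik⟩
    funext j; simp [hR, rmat, intVec, Matrix.map_apply]
  · rw [hxsupp i hik, zero_smul]; exact Submodule.zero_mem _

/-- A vector orthogonal to the kernel of a symmetric real matrix is in its range. -/
lemma aux_perp_ker_mem_range {Q : Md d} (hQs : Qᵀ = Q) (u : Fin d → ℝ)
    (hu : ∀ z, Q.mulVec z = 0 → z ⬝ᵥ u = 0) : ∃ c, Q.mulVec c = u := by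
  classical
  let E := EuclideanSpace ℝ (Fin d)
  let e : E ≃ₗ[ℝ] (Fin d → ℝ) := WithLp.linearEquiv 2 ℝ (Fin d → ℝ)
  let f : E →ₗ[ℝ] E := e.symm.toLinearMap ∘ₗ Q.mulVecLin ∘ₗ e.toLinearMap
  have hf : ∀ w : E, e (f w) = Q.mulVec (e w) := by
    intro w
    simp only [f, LinearMap.coe_comp, Function.comp_apply, LinearEquiv.coe_coe,
      LinearEquiv.apply_symm_apply, Matrix.mulVecLin_apply]
  have hinn : ∀ v w : E, (inner ℝ v w : ℝ) = (e v) ⬝ᵥ (e w) := by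
    intro v w
    rw [PiLp.inner_apply]
    simp only [RCLike.inner_apply, conj_trivial]
    exact Finset.sum_congr rfl fun i _ => mul_comm _ _
  have key : (LinearMap.range f)ᗮ = LinearMap.ker f := by
    ext zv
    rw [Submodule.mem_orthogonal, LinearMap.mem_ker]
    constructor
    · intro h
      have h2 : ∀ w : E, (inner ℝ w (f zv) : ℝ) = 0 := by
        intro w
        have h3 := h (f w) (LinearMap.mem_range_self f w)
        rw [hinn, hf] at h3
        rw [hinn, hf]
        calc (e w) ⬝ᵥ Q.mulVec (e zv) = (e zv) ⬝ᵥ Q.mulVec (e w) :=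
              aux_dot_mulVec_symm hQs _ _
          _ = Q.mulVec (e w) ⬝ᵥ (e zv) := dotProduct_comm _ _
          _ = 0 := h3
      exact inner_self_eq_zero.mp (h2 (f zv))
    · rintro h u hu
      obtain ⟨w, rfl⟩ := hu
      have hz : Q.mulVec (e zv) = 0 := by rw [← hf, h, map_zero]
      rw [hinn, hf]
      calc Q.mulVec (e w) ⬝ᵥ (e zv) = (e zv) ⬝ᵥ Q.mulVec (e w) := dotProduct_comm _ _
        _ = (e w) ⬝ᵥ Q.mulVec (e zv) := aux_dot_mulVec_symm hQs _ _
        _ = 0 := by rw [hz, dotProduct_zero]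
  have hu' : e.symm u ∈ (LinearMap.ker f)ᗮ := by
    rw [Submodule.mem_orthogonal]
    intro z hz
    rw [LinearMap.mem_ker] at hz
    have hQz : Q.mulVec (e z) = 0 := by rw [← hf, hz, map_zero]
    rw [hinn, LinearEquiv.apply_symm_apply]
    exact hu (e z) hQz
  rw [← key, Submodule.orthogonal_orthogonal] at hu'
  obtain ⟨w, hw⟩ := hu'
  refine ⟨e w, ?_⟩
  rw [← hf, hw, LinearEquiv.apply_symm_apply]

/-- If `Q ≠ 0`, the lifted point set affinely spans all of `ℝ^{d+1}`. -/
lemma aux_liftSpan_top {Λ : Set (Fin d → ℝ)} (hΛ : IsStdPeriodic Λ) {Q : Md d}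
    (hpsd : Q.PosSemidef) (hQs : Qᵀ = Q) (hQne : Q ≠ 0) :
    vectorSpan ℝ (liftQ Q '' Λ) = ⊤ := by
  classical
  obtain ⟨t₀, ht₀⟩ := aux_periodic_nonempty hΛ
  obtain ⟨j, hj⟩ : ∃ j, 0 < qf Q (Pi.single j (1 : ℝ)) := by
    by_contra hno
    push_neg at hno
    exact hQne (aux_Q_eq_zero hpsd fun j =>
      le_antisymm (hno j) (aux_qf_nonneg hpsd _))
  set V := vectorSpan ℝ (liftQ Q '' Λ) with hV
  have hmem : ∀ x ∈ Λ, ∀ y ∈ Λ, liftQ Q x - liftQ Q y ∈ V := by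
    intro x hx y hy
    have := vsub_mem_vectorSpan ℝ (Set.mem_image_of_mem (liftQ Q) hx)
      (Set.mem_image_of_mem (liftQ Q) hy)
    simpa [vsub_eq_sub] using this
  set ev : Fin d → ℝ := Pi.single j (1 : ℝ) with hev
  have hline : ∀ n : ℤ, t₀ + (n : ℝ) • ev ∈ Λ := by
    intro n
    have := aux_periodic_add hΛ ht₀ (n • Pi.single j (1 : ℤ))
    rwa [aux_intVec_zsmul, aux_intVec_single] at this
  set B : ℝ := Q.mulVec t₀ ⬝ᵥ ev with hB
  have hqfl : ∀ r : ℝ, qf Q (t₀ + r • ev)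
      = qf Q t₀ + r * (2 * B) + r ^ 2 * qf Q ev := by
    intro r
    rw [aux_qf_add hQs, aux_qf_smul]
    have : Q.mulVec t₀ ⬝ᵥ (r • ev) = r * B := by rw [dotProduct_smul, hB]; rfl
    rw [this]; ring
  -- the vertical basis vector lies in V
  have hlastmem : Pi.single (Fin.last d) (1 : ℝ) ∈ V := by
    have h1 := hmem _ (hline 1) _ ht₀
    have h2 := hmem _ (hline 2) _ ht₀
    have hz : (liftQ Q (t₀ + ((2:ℤ) : ℝ) • ev) - liftQ Q t₀)
        - (2:ℝ) • (liftQ Q (t₀ + ((1:ℤ) : ℝ) • ev) - liftQ Q t₀)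
        = (2 * qf Q ev) • (Pi.single (Fin.last d) (1 : ℝ) : Fin (d + 1) → ℝ) := by
      funext i
      refine Fin.lastCases ?_ (fun i' => ?_) i
      · simp only [Pi.sub_apply, Pi.smul_apply, liftQ, Fin.snoc_last,
          Pi.single_eq_same, smul_eq_mul]
        rw [hqfl, hqfl]
        push_cast
        ring
      · simp only [Pi.sub_apply, Pi.smul_apply, liftQ, Fin.snoc_castSucc,
          Pi.add_apply, Pi.smul_apply, smul_eq_mul]
        rw [Pi.single_eq_of_ne (Fin.castSucc_lt_last i').ne]
        push_cast
        ring
    have hzmem : (2 * qf Q ev) • (Pi.single (Fin.last d) (1 : ℝ) : Fin (d + 1) → ℝ) ∈ V := by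
      rw [← hz]
      exact Submodule.sub_mem _ h2 (Submodule.smul_mem _ _ h1)
    have := Submodule.smul_mem V (2 * qf Q ev)⁻¹ hzmem
    rwa [smul_smul, inv_mul_cancel₀ (by positivity), one_smul] at this
  have hcsmem : ∀ i : Fin d, Pi.single (Fin.castSucc i) (1 : ℝ) ∈ V := by
    intro i
    have hiΛ : t₀ + intVec (Pi.single i (1 : ℤ)) ∈ Λ := aux_periodic_add hΛ ht₀ _
    have hui := hmem _ hiΛ _ ht₀
    set γ : ℝ := qf Q (t₀ + intVec (Pi.single i (1 : ℤ))) - qf Q t₀ with hγ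
    have hrepr : Pi.single (Fin.castSucc i) (1 : ℝ)
        = (liftQ Q (t₀ + intVec (Pi.single i (1 : ℤ))) - liftQ Q t₀)
          - γ • (Pi.single (Fin.last d) (1 : ℝ) : Fin (d + 1) → ℝ) := by
      funext b
      refine Fin.lastCases ?_ (fun b' => ?_) b
      · simp only [Pi.sub_apply, Pi.smul_apply, liftQ, Fin.snoc_last,
          Pi.single_eq_same, smul_eq_mul, hγ]
        rw [Pi.single_eq_of_ne (Fin.castSucc_lt_last i).ne']
        ring
      · simp only [Pi.sub_apply, Pi.smul_apply, liftQ, Fin.snoc_castSucc,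
          Pi.add_apply, smul_eq_mul]
        rw [Pi.single_eq_of_ne (Fin.castSucc_lt_last b').ne, aux_intVec_single]
        have : (Pi.single (Fin.castSucc i) (1:ℝ) : Fin (d + 1) → ℝ) (Fin.castSucc b')
            = (Pi.single i (1:ℝ) : Fin d → ℝ) b' := by
          simp [Pi.single_apply, Fin.castSucc_inj]
        rw [this]
        ring
    rw [hrepr]
    exact Submodule.sub_mem _ hui (Submodule.smul_mem _ _ hlastmem)
  rw [eq_top_iff, ← (Pi.basisFun ℝ (Fin (d + 1))).span_eq]
  refine Submodule.span_le.mpr ?_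
  rintro _ ⟨i, rfl⟩
  rw [Pi.basisFun_apply]
  exact Fin.lastCases hlastmem hcsmem i

/-- For the zero form the projected hull is a Delone polyhedron. -/
lemma aux_hull_delsub {Λ : Set (Fin d → ℝ)} (hΛ : IsStdPeriodic Λ) :
    projd '' (convexHull ℝ (liftQ (0 : Md d) '' Λ)) ∈ DelSub Λ 0 := by
  have him : projd '' (convexHull ℝ (liftQ (0 : Md d) '' Λ)) = convexHull ℝ Λ := by
    rw [aux_projd_hull, Set.image_image]
    simp only [aux_projd_lift, Set.image_id']
  refine ⟨Λ, subset_rfl, aux_periodic_nonempty hΛ, him, 0, 0, fun v _ => ?_,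
    fun v hv hnv => absurd hv hnv⟩
  simp [qf, Matrix.zero_mulVec]

end Aux2

section Aux3

lemma aux_dot_lift_line {Q : Md d} (hQs : Qᵀ = Q) (a : Fin (d + 1) → ℝ)
    (t e : Fin d → ℝ) (r : ℝ) :
    a ⬝ᵥ liftQ Q (t + r • e)
      = (projd a ⬝ᵥ t + a (Fin.last d) * qf Q t)
        + r * (projd a ⬝ᵥ e + 2 * a (Fin.last d) * (Q.mulVec t ⬝ᵥ e))
        + r ^ 2 * (a (Fin.last d) * qf Q e) := by
  rw [aux_dot_lift, aux_qf_add hQs, aux_qf_smul, dotProduct_add]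
  have h1 : projd a ⬝ᵥ (r • e) = r * (projd a ⬝ᵥ e) := by
    rw [dotProduct_smul, smul_eq_mul]
  have h2 : Q.mulVec t ⬝ᵥ (r • e) = r * (Q.mulVec t ⬝ᵥ e) := by
    rw [dotProduct_smul, smul_eq_mul]
  rw [h1, h2]; ring

lemma aux_vectorSpan_convexHull (s : Set (Fin (d + 1) → ℝ)) :
    vectorSpan ℝ (convexHull ℝ s) = vectorSpan ℝ s := by
  rw [← direction_affineSpan, affineSpan_convexHull, direction_affineSpan]

lemma aux_qf_zero_fun (x : Fin d → ℝ) : qf (0 : Md d) x = 0 := by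
  simp [qf, Matrix.zero_mulVec]

end Aux3

/-- The Delone subdivision of `Q` consists of the projections of the
at-most-`d`-dimensional faces of the lifted polyhedron `conv{(x, Q[x]) : x ∈ Λ}`. -/
theorem statement11 (d : ℕ) (Λ : Set (Fin d → ℝ)) (hΛ : IsStdPeriodic Λ)
    (Q : Md d) (hQ : Q ∈ RationalClosure d) :
    DelSub Λ Q =
      {P | ∃ Fb : Set (Fin (d + 1) → ℝ),
        IsFaceOf Fb (convexHull ℝ (liftQ Q '' Λ)) ∧ Fb.Nonempty ∧
        Module.finrank ℝ ↥(vectorSpan ℝ Fb) ≤ d ∧ P = projd '' Fb} := by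
  classical
  have hpsd : Q.PosSemidef := hQ.1
  have hQs : Qᵀ = Q := aux_psd_symm hpsd
  obtain ⟨t₀, ht₀⟩ := aux_periodic_nonempty hΛ
  apply Set.Subset.antisymm
  · -- Delone polytopes are projections of low-dimensional faces
    rintro P ⟨S, hSΛ, hSne, hP, c, r, heq, hlt⟩
    set a : Fin (d + 1) → ℝ := Fin.snoc ((2 : ℝ) • Q.mulVec c) (-1) with ha
    have hproja : projd a = (2 : ℝ) • Q.mulVec c := by
      funext i; simp [projd, ha, Fin.snoc_castSucc]
    have halast : a (Fin.last d) = -1 := by simp [ha, Fin.snoc_last]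
    have hval : ∀ v : Fin d → ℝ,
        a ⬝ᵥ liftQ Q v = qf Q c - qf Q (c - v) := by
      intro v
      rw [aux_dot_lift, hproja, halast, aux_qf_sub hQs, smul_dotProduct]
      simp only [smul_eq_mul]
      ring
    set b : ℝ := qf Q c - r ^ 2 with hb
    have hsupg : ∀ y ∈ liftQ Q '' Λ, a ⬝ᵥ y ≤ b := by
      rintro y ⟨v, hv, rfl⟩
      rw [hval]
      by_cases hvS : v ∈ S
      · rw [heq v hvS]
      · have := hlt v hv hvS
        rw [hb]; linarith
    have hES : {y ∈ liftQ Q '' Λ | a ⬝ᵥ y = b} = liftQ Q '' S := by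
      ext y
      constructor
      · rintro ⟨⟨v, hv, rfl⟩, hyb⟩
        refine ⟨v, ?_, rfl⟩
        by_contra hvS
        have h1 := hlt v hv hvS
        rw [hval, hb] at hyb
        linarith
      · rintro ⟨v, hvS, rfl⟩
        exact ⟨⟨v, hSΛ hvS, rfl⟩, by rw [hval, heq v hvS]⟩
    refine ⟨{x ∈ convexHull ℝ (liftQ Q '' Λ) | a ⬝ᵥ x = b},
      ⟨a, b, aux_hull_le hsupg, rfl⟩, ?_, ?_, ?_⟩
    · obtain ⟨v₀, hv₀⟩ := hSne
      exact ⟨liftQ Q v₀,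
        subset_convexHull ℝ _ (Set.mem_image_of_mem _ (hSΛ hv₀)),
        by rw [hval, heq v₀ hv₀]⟩
    · -- dimension bound
      set W := LinearMap.ker (IsLinearMap.mk' _ (aux_dot_linear a)) with hW
      have hsub : vectorSpan ℝ {x ∈ convexHull ℝ (liftQ Q '' Λ) | a ⬝ᵥ x = b}
          ≤ W := by
        rw [vectorSpan_def]
        refine Submodule.span_le.mpr ?_
        rintro u hu
        rw [Set.mem_vsub] at hu
        obtain ⟨x, hx, y, hy, rfl⟩ := hu
        rw [SetLike.mem_coe, hW, LinearMap.mem_ker, IsLinearMap.mk'_apply]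
        rw [vsub_eq_sub, dotProduct_sub, hx.2, hy.2, sub_self]
      have hWne : W ≠ ⊤ := by
        intro htop
        have hmem : (Pi.single (Fin.last d) (1 : ℝ) : Fin (d + 1) → ℝ) ∈ W := by
          rw [htop]; exact Submodule.mem_top
        rw [hW, LinearMap.mem_ker, IsLinearMap.mk'_apply,
          dotProduct_single, halast] at hmem
        norm_num at hmem
      have hfr : Module.finrank ℝ ↥W < d + 1 := by
        have := Submodule.finrank_lt hWne
        rwa [Module.finrank_fin_fun] at this
      exact Nat.lt_succ_iff.mp (lt_of_le_of_lt (Submodule.finrank_mono hsub) hfr)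
    · -- projection identity
      have hfeq : {x ∈ convexHull ℝ (liftQ Q '' Λ) | a ⬝ᵥ x = b}
          = convexHull ℝ (liftQ Q '' S) := by
        rw [aux_hull_face_eq _ a b hsupg, hES]
      rw [hfeq, aux_projd_hull, Set.image_image]
      simp only [aux_projd_lift, Set.image_id']
      exact hP
  · -- projections of low-dimensional faces are Delone polytopes
    rintro P ⟨Fb, ⟨a, b, hsupp, hFb⟩, hne, hdim, hPdef⟩
    have hsupg : ∀ v ∈ Λ, a ⬝ᵥ liftQ Q v ≤ b := fun v hv =>
      hsupp _ (subset_convexHull ℝ _ (Set.mem_image_of_mem _ hv))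
    have hlineall : ∀ t ∈ Λ, ∀ (w : Fin d → ℤ) (n : ℤ),
        a ⬝ᵥ liftQ Q (t + (n : ℝ) • intVec w) ≤ b := by
      intro t ht w n
      have hmem : t + (n : ℝ) • intVec w ∈ Λ := by
        have := aux_periodic_add hΛ ht (n • w)
        rwa [aux_intVec_zsmul] at this
      exact hsupg _ hmem
    rcases lt_trichotomy (a (Fin.last d)) 0 with hsneg | hs0 | hspos
    · -- lower face: genuine Delone polytope
      have hperp : ∀ w : Fin d → ℤ, Q.mulVec (intVec w) = 0 →
          projd a ⬝ᵥ intVec w = 0 := by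
        intro w hw
        have hqfw : qf Q (intVec w) = 0 := by rw [qf, hw, dotProduct_zero]
        have hQte : Q.mulVec t₀ ⬝ᵥ intVec w = 0 := by
          calc Q.mulVec t₀ ⬝ᵥ intVec w
              = intVec w ⬝ᵥ Q.mulVec t₀ := dotProduct_comm _ _
            _ = t₀ ⬝ᵥ Q.mulVec (intVec w) := aux_dot_mulVec_symm hQs _ _
            _ = 0 := by rw [hw, dotProduct_zero]
        apply aux_int_linear_bounded
          (C := projd a ⬝ᵥ t₀ + a (Fin.last d) * qf Q t₀) (b := b)
        intro n
        have h := hlineall t₀ ht₀ w n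
        rw [aux_dot_lift_line hQs, hqfw, hQte] at h
        simp only [mul_zero, add_zero, zero_mul] at h
        linarith
      have hua : ∀ z, Q.mulVec z = 0 → z ⬝ᵥ projd a = 0 := by
        intro z hz
        have hspan := aux_ker_span hQ z hz
        have hle : Submodule.span ℝ
            {y : Fin d → ℝ | (∃ w, y = intVec w) ∧ Q.mulVec y = 0}
            ≤ LinearMap.ker (IsLinearMap.mk' _ (aux_dot_linear' (projd a))) := by
          refine Submodule.span_le.mpr ?_
          rintro y ⟨⟨w, rfl⟩, hker⟩
          rw [SetLike.mem_coe, LinearMap.mem_ker, IsLinearMap.mk'_apply,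
            dotProduct_comm]
          exact hperp w hker
        have := hle hspan
        rwa [LinearMap.mem_ker, IsLinearMap.mk'_apply] at this
      obtain ⟨c₀, hc₀⟩ := aux_perp_ker_mem_range hQs (projd a) hua
      set c : Fin d → ℝ := (2 * (-(a (Fin.last d))))⁻¹ • c₀ with hc
      have hQc : Q.mulVec c = (2 * (-(a (Fin.last d))))⁻¹ • projd a := by
        rw [hc, Matrix.mulVec_smul, hc₀]
      have hsne : a (Fin.last d) ≠ 0 := ne_of_lt hsneg
      have key : ∀ v : Fin d → ℝ,
          qf Q (c - v) = qf Q c + (a (Fin.last d))⁻¹ * (a ⬝ᵥ liftQ Q v) := by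
        intro v
        rw [aux_qf_sub hQs, aux_dot_lift, hQc, smul_dotProduct]
        simp only [smul_eq_mul]
        field_simp
        ring
      set Sv : Set (Fin d → ℝ) := {v ∈ Λ | a ⬝ᵥ liftQ Q v = b} with hSv
      have hES : {y ∈ liftQ Q '' Λ | a ⬝ᵥ y = b} = liftQ Q '' Sv := by
        ext y
        constructor
        · rintro ⟨⟨v, hv, rfl⟩, hyb⟩; exact ⟨v, ⟨hv, hyb⟩, rfl⟩
        · rintro ⟨v, ⟨hv, hvb⟩, rfl⟩; exact ⟨⟨v, hv, rfl⟩, hvb⟩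
      have hsupim : ∀ y ∈ liftQ Q '' Λ, a ⬝ᵥ y ≤ b := by
        rintro y ⟨v, hv, rfl⟩; exact hsupg v hv
      have hFbeq : Fb = convexHull ℝ (liftQ Q '' Sv) := by
        rw [hFb, aux_hull_face_eq _ a b hsupim, hES]
      obtain ⟨x₀, hx₀⟩ := hne
      have hSvne : Sv.Nonempty := by
        rcases Set.eq_empty_or_nonempty Sv with hS | hS
        · rw [hFbeq, hS, Set.image_empty, convexHull_empty] at hx₀
          exact absurd hx₀ (Set.notMem_empty x₀)
        · exact hS
      obtain ⟨v₀, hv₀⟩ := hSvne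
      set ρ : ℝ := qf Q c + (a (Fin.last d))⁻¹ * b with hρ
      have hρ0 : 0 ≤ ρ := by
        have h1 : qf Q (c - v₀) = ρ := by rw [key, hv₀.2]
        rw [← h1]
        exact aux_qf_nonneg hpsd _
      refine ⟨Sv, fun v hv => hv.1, ⟨v₀, hv₀⟩, ?_, c, Real.sqrt ρ, ?_, ?_⟩
      · rw [hPdef, hFbeq, aux_projd_hull, Set.image_image]
        simp only [aux_projd_lift, Set.image_id']
      · intro v hv
        rw [Real.sq_sqrt hρ0, key, hv.2]
      · intro v hv hvS
        have hlt' : a ⬝ᵥ liftQ Q v < b :=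
          lt_of_le_of_ne (hsupg v hv) (fun hc' => hvS ⟨hv, hc'⟩)
        rw [Real.sq_sqrt hρ0, key, hρ]
        have hsinv : (a (Fin.last d))⁻¹ < 0 := inv_lt_zero.mpr hsneg
        have := mul_lt_mul_of_neg_left hlt' hsinv
        linarith
    · -- horizontal normal: face is the whole (flat) hull, and Q = 0
      have haj : ∀ j : Fin d, projd a ⬝ᵥ (Pi.single j (1 : ℝ) : Fin d → ℝ) = 0 := by
        intro j
        apply aux_int_linear_bounded (C := projd a ⬝ᵥ t₀) (b := b)
        intro n
        have h := hlineall t₀ ht₀ (Pi.single j 1) n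
        rw [aux_intVec_single, aux_dot_lift_line hQs, hs0] at h
        simp only [zero_mul, mul_zero, add_zero] at h
        linarith
      have haproj0 : projd a = 0 := by
        funext j
        have := haj j
        rwa [dotProduct_single, mul_one] at this
      have hgen : ∀ v ∈ Λ, a ⬝ᵥ liftQ Q v = 0 := by
        intro v hv
        rw [aux_dot_lift, haproj0, zero_dotProduct, hs0, zero_mul, add_zero]
      have hhyper : ∀ x ∈ convexHull ℝ (liftQ Q '' Λ), a ⬝ᵥ x = 0 :=
        aux_hull_eq (by rintro y ⟨v, hv, rfl⟩; exact hgen v hv)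
      obtain ⟨x₀, hx₀⟩ := hne
      have hx₀' := hx₀
      rw [hFb] at hx₀'
      have hb0 : b = 0 := by rw [← hx₀'.2, hhyper _ hx₀'.1]
      have hFbhull : Fb = convexHull ℝ (liftQ Q '' Λ) := by
        rw [hFb]
        ext x
        constructor
        · exact fun hx => hx.1
        · exact fun hx => ⟨hx, by rw [hhyper x hx, hb0]⟩
      have hQ0 : Q = 0 := by
        by_contra hQne
        rw [hFbhull, aux_vectorSpan_convexHull,
          aux_liftSpan_top hΛ hpsd hQs hQne] at hdim
        rw [finrank_top, Module.finrank_fin_fun] at hdim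
        omega
      subst hQ0
      rw [hPdef, hFbhull]
      exact aux_hull_delsub hΛ
    · -- upward normal: forces Q = 0 and a flat hull
      have hqfdiag : ∀ j : Fin d, qf Q (Pi.single j (1 : ℝ)) = 0 := by
        intro j
        by_contra hne0
        have hqfj : 0 < qf Q (Pi.single j (1 : ℝ)) :=
          lt_of_le_of_ne (aux_qf_nonneg hpsd _) (Ne.symm hne0)
        refine aux_int_quadratic_bounded
          (C := projd a ⬝ᵥ t₀ + a (Fin.last d) * qf Q t₀)
          (g := projd a ⬝ᵥ Pi.single j 1
            + 2 * a (Fin.last d) * (Q.mulVec t₀ ⬝ᵥ Pi.single j 1))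
          (b := b) (mul_pos hspos hqfj) ?_
        intro n
        have h := hlineall t₀ ht₀ (Pi.single j 1) n
        rw [aux_intVec_single, aux_dot_lift_line hQs] at h
        exact h
      have hQ0 : Q = 0 := aux_Q_eq_zero hpsd hqfdiag
      subst hQ0
      have haj : ∀ j : Fin d, projd a ⬝ᵥ (Pi.single j (1 : ℝ) : Fin d → ℝ) = 0 := by
        intro j
        apply aux_int_linear_bounded (C := projd a ⬝ᵥ t₀) (b := b)
        intro n
        have h := hlineall t₀ ht₀ (Pi.single j 1) n
        rw [aux_intVec_single, aux_dot_lift_line hQs] at h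
        simp only [aux_qf_zero_fun, Matrix.zero_mulVec, zero_dotProduct,
          dotProduct_zero, mul_zero, add_zero, zero_mul] at h
        linarith
      have haproj0 : projd a = 0 := by
        funext j
        have := haj j
        rwa [dotProduct_single, mul_one] at this
      have hgen : ∀ v ∈ Λ, a ⬝ᵥ liftQ (0 : Md d) v = 0 := by
        intro v hv
        rw [aux_dot_lift, haproj0, zero_dotProduct, aux_qf_zero_fun, mul_zero,
          add_zero]
      have hhyper : ∀ x ∈ convexHull ℝ (liftQ (0 : Md d) '' Λ), a ⬝ᵥ x = 0 :=
        aux_hull_eq (by rintro y ⟨v, hv, rfl⟩; exact hgen v hv)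
      obtain ⟨x₀, hx₀⟩ := hne
      have hx₀' := hx₀
      rw [hFb] at hx₀'
      have hb0 : b = 0 := by rw [← hx₀'.2, hhyper _ hx₀'.1]
      have hFbhull : Fb = convexHull ℝ (liftQ (0 : Md d) '' Λ) := by
        rw [hFb]
        ext x
        constructor
        · exact fun hx => hx.1
        · exact fun hx => ⟨hx, by rw [hhyper x hx, hb0]⟩
      rw [hPdef, hFbhull]
      exact aux_hull_delsub hΛ
end Vor

end
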